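/- Let μ be a Borel probability measure on [0,1] whose support is not contained in {0,1}, and let A be a positive definite n×n complex matrix. Then the map X ↦ φ_μ(A,X) is strictly convex on the cone of positive definite n×n complex matrices. -/

import Mathlib

open MeasureTheory Matrix
open scoped ComplexOrder

/-- `f_μ(x) = ∫_{[0,1]} x / ((1-λ)x + λ) dμ(λ)`. -/
noncomputable def fmu (μ : Measure ℝ) (x : ℝ) : ℝ := ∫ l, x / ((1 - l) * x + l) ∂μ

/-- The center of mass `c(μ) = ∫_{[0,1]} λ dμ(λ)`. -/
noncomputable def cmu (μ : Measure ℝ) : ℝ := ∫ l, l ∂μ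

/-- The positive square root of a positive definite matrix, via functional calculus. -/
noncomputable def matSqrt {n : ℕ} (A : Matrix (Fin n) (Fin n) ℂ) : Matrix (Fin n) (Fin n) ℂ :=
  cfc Real.sqrt A

/-- The Kubo–Ando mean `A σ_μ B = A^{1/2} f_μ(A^{-1/2} B A^{-1/2}) A^{1/2}`. -/
noncomputable def kuboAndo {n : ℕ} (μ : Measure ℝ) (A B : Matrix (Fin n) (Fin n) ℂ) :
    Matrix (Fin n) (Fin n) ℂ :=
  matSqrt A * cfc (fmu μ) ((matSqrt A)⁻¹ * B * (matSqrt A)⁻¹) * matSqrt A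

/-- The generalized quantum Hellinger divergence
`φ_μ(A,B) = Tr((1-c(μ))A + c(μ)B - A σ_μ B)`. -/
noncomputable def qhd {n : ℕ} (μ : Measure ℝ) (A B : Matrix (Fin n) (Fin n) ℂ) : ℝ :=
  (((1 - cmu μ) • A + cmu μ • B - kuboAndo μ A B).trace).re


variable {n : ℕ}

namespace QHDAux

abbrev Mat (n : ℕ) := Matrix (Fin n) (Fin n) ℂ

lemma real_smul_eq {r : ℝ} {M : Mat n} : r • M = (r : ℂ) • M := by
  ext i j; simp [Matrix.smul_apply, Complex.real_smul]

lemma posDef_smul {r : ℝ} (hr : 0 < r) {M : Mat n} (hM : M.PosDef) : (r • M).PosDef := by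
  rw [real_smul_eq]
  refine Matrix.PosDef.of_dotProduct_mulVec_pos ?_ (fun x hx => ?_)
  · have h1 := hM.1
    unfold Matrix.IsHermitian at *
    rw [conjTranspose_smul, h1]
    congr 1
    simp [Complex.ext_iff]
  · rw [smul_mulVec, dotProduct_smul, smul_eq_mul]
    have := hM.dotProduct_mulVec_pos hx
    have hr' : (0:ℂ) < (r:ℂ) := by exact_mod_cast hr
    exact mul_pos hr' this

lemma posSemidef_smul {r : ℝ} (hr : 0 ≤ r) {M : Mat n} (hM : M.PosSemidef) :
    (r • M).PosSemidef := by
  rw [real_smul_eq]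
  refine Matrix.PosSemidef.of_dotProduct_mulVec_nonneg ?_ (fun x => ?_)
  · have h1 := hM.1
    unfold Matrix.IsHermitian at *
    rw [conjTranspose_smul, h1]
    congr 1
    simp [Complex.ext_iff]
  · rw [smul_mulVec, dotProduct_smul, smul_eq_mul]
    have := hM.dotProduct_mulVec_nonneg x
    have hr' : (0:ℂ) ≤ (r:ℂ) := by exact_mod_cast hr
    exact mul_nonneg hr' this

lemma posDef_conj {M B : Mat n} (hM : M.PosDef) (hB : IsUnit B) : (Bᴴ * M * B).PosDef := by
  refine Matrix.PosDef.of_dotProduct_mulVec_pos ?_ (fun x hx => ?_)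
  · have h1 := hM.1
    unfold Matrix.IsHermitian at *
    rw [conjTranspose_mul, conjTranspose_mul, conjTranspose_conjTranspose, h1, mul_assoc]
  · have hBx : B *ᵥ x ≠ 0 := by
      intro h
      exact hx (by simpa using (Matrix.mulVec_injective_iff_isUnit.mpr hB) (h.trans (Matrix.mulVec_zero B).symm))
    have := hM.dotProduct_mulVec_pos hBx
    rw [star_mulVec, Matrix.mulVec_mulVec, Matrix.dotProduct_mulVec,
      Matrix.vecMul_vecMul, ← Matrix.dotProduct_mulVec, ← mul_assoc] at this
    exact this

end QHDAux

namespace QHDAux2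
open QHDAux

lemma diag_conj_eq {R N : Mat n} (i : Fin n) :
    (Nᴴ * R * N) i i = star (fun j => N j i) ⬝ᵥ R *ᵥ (fun j => N j i) := by
  simp [Matrix.mul_apply, dotProduct, Matrix.mulVec, Matrix.conjTranspose_apply,
    Finset.mul_sum, Finset.sum_mul, mul_assoc]
  rw [Finset.sum_comm]

lemma trace_conj_re_nonneg {R N : Mat n} (hR : R.PosSemidef) :
    0 ≤ ((Nᴴ * R * N).trace).re := by
  rw [Matrix.trace]
  rw [Complex.re_sum]
  refine Finset.sum_nonneg fun i _ => ?_
  rw [Matrix.diag_apply, diag_conj_eq]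
  exact hR.re_dotProduct_nonneg _

lemma trace_conj_re_pos {R N : Mat n} (hR : R.PosDef) (hN : N ≠ 0) :
    0 < ((Nᴴ * R * N).trace).re := by
  rw [Matrix.trace, Complex.re_sum]
  obtain ⟨j, i, hji⟩ : ∃ j i, N j i ≠ 0 := by
    by_contra h
    push_neg at h
    exact hN (by ext j i; simpa using h j i)
  refine Finset.sum_pos' (fun k _ => ?_) ⟨i, Finset.mem_univ i, ?_⟩
  · rw [Matrix.diag_apply, diag_conj_eq]; exact hR.posSemidef.re_dotProduct_nonneg _
  · rw [Matrix.diag_apply, diag_conj_eq]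
    refine hR.re_dotProduct_pos ?_
    intro h
    exact hji (congrFun h j)

lemma inv_expand {P Q : Mat n} (hP : IsUnit P.det) (hQ : IsUnit Q.det) :
    Q⁻¹ = P⁻¹ - P⁻¹*(Q-P)*P⁻¹ + P⁻¹*(Q-P)*Q⁻¹*(Q-P)*P⁻¹ := by
  have h1 : P⁻¹*(Q-P)*Q⁻¹ = P⁻¹ - Q⁻¹ := by
    rw [Matrix.mul_sub, Matrix.sub_mul, mul_assoc, mul_assoc, Matrix.mul_nonsing_inv _ hQ]
    rw [mul_one, ← mul_assoc, Matrix.nonsing_inv_mul _ hP, one_mul]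
  have h2 : Q⁻¹*(Q-P)*P⁻¹ = P⁻¹ - Q⁻¹ := by
    rw [Matrix.mul_sub, Matrix.sub_mul, Matrix.nonsing_inv_mul _ hQ, one_mul,
      mul_assoc, Matrix.mul_nonsing_inv _ hP, mul_one]
  calc Q⁻¹ = P⁻¹ - P⁻¹*(Q-P)*P⁻¹ + (P⁻¹*(Q-P)*P⁻¹ - Q⁻¹*(Q-P)*P⁻¹) := by
        rw [h2]; abel
    _ = P⁻¹ - P⁻¹*(Q-P)*P⁻¹ + P⁻¹*(Q-P)*Q⁻¹*(Q-P)*P⁻¹ := by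
        rw [show P⁻¹*(Q-P)*Q⁻¹*(Q-P)*P⁻¹ = (P⁻¹*(Q-P)*Q⁻¹)*((Q-P)*P⁻¹) by
          simp only [mul_assoc], h1, Matrix.sub_mul]
        simp only [mul_assoc]
        try abel

end QHDAux2

namespace QHDCore
open QHDAux QHDAux2

lemma re_smul (r : ℝ) (z : ℂ) : ((r • z : ℂ)).re = r * z.re := by
  simp [Complex.real_smul]

lemma tangent {A P Q : Mat n} (hA : A.IsHermitian) (hP : P.PosDef) (hQ : Q.PosDef) :
    ((A*Q⁻¹*A).trace).re = ((A*P⁻¹*A).trace).re - ((A*(P⁻¹*(Q-P)*P⁻¹)*A).trace).re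
      + ((((Q-P)*P⁻¹*A)ᴴ * Q⁻¹ * ((Q-P)*P⁻¹*A)).trace).re := by
  have hNc : ((Q-P)*P⁻¹*A)ᴴ = A * (P⁻¹*(Q-P)) := by
    rw [conjTranspose_mul, conjTranspose_mul, hA.eq, hP.1.inv.eq, (hQ.1.sub hP.1).eq]
  have key : A*Q⁻¹*A = A*P⁻¹*A - A*(P⁻¹*(Q-P)*P⁻¹)*A
      + ((Q-P)*P⁻¹*A)ᴴ * Q⁻¹ * ((Q-P)*P⁻¹*A) := by
    rw [hNc]
    conv_lhs => rw [inv_expand hP.det_pos.ne'.isUnit hQ.det_pos.ne'.isUnit]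
    simp only [Matrix.mul_add, Matrix.add_mul, Matrix.mul_sub, Matrix.sub_mul, mul_assoc]
    try abel
  rw [key, Matrix.trace_add, Matrix.trace_sub, Complex.add_re, Complex.sub_re]

lemma u_lt {A P X2 Y2 : Mat n} (hA : A.PosDef) (hP : P.PosDef) (hX : X2.PosDef) (hY : Y2.PosDef)
    {a b : ℝ} (ha : 0 < a) (hb : 0 < b) (hab : a + b = 1)
    (hPc : a • X2 + b • Y2 = P) (hne : X2 ≠ P) :
    ((A*P⁻¹*A).trace).re < a * ((A*X2⁻¹*A).trace).re + b * ((A*Y2⁻¹*A).trace).re := by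
  have hPAu : IsUnit (P⁻¹*A) := (hP.inv.isUnit).mul hA.isUnit
  have hNX : (X2-P)*P⁻¹*A ≠ 0 := by
    intro h
    apply sub_ne_zero.mpr hne
    have h2 : (X2-P) * ((P⁻¹*A) * (P⁻¹*A)⁻¹) = 0 := by
      rw [← mul_assoc, show (X2-P)*(P⁻¹*A) = (X2-P)*P⁻¹*A from (mul_assoc _ _ _).symm, h,
        Matrix.zero_mul]
    rwa [Matrix.mul_nonsing_inv _ (Matrix.isUnit_iff_isUnit_det _ |>.1 hPAu), mul_one] at h2
  have hrX : 0 < ((((X2-P)*P⁻¹*A)ᴴ * X2⁻¹ * ((X2-P)*P⁻¹*A)).trace).re :=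
    trace_conj_re_pos hX.inv hNX
  have hrY : 0 ≤ ((((Y2-P)*P⁻¹*A)ᴴ * Y2⁻¹ * ((Y2-P)*P⁻¹*A)).trace).re :=
    trace_conj_re_nonneg hY.inv.posSemidef
  have t1 := tangent hA.1 hP hX
  have t2 := tangent hA.1 hP hY
  have hsmul : ∀ (r : ℝ) (Δ : Mat n),
      r * ((A*(P⁻¹*Δ*P⁻¹)*A).trace).re = ((A*(P⁻¹*(r•Δ)*P⁻¹)*A).trace).re := by
    intro r Δ
    simp only [Matrix.mul_smul, Matrix.smul_mul, Matrix.trace_smul, re_smul]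
  have hzero : a•(X2-P)+b•(Y2-P) = (0 : Mat n) := by
    have : (a+b)•P = a•P+b•P := add_smul a b P
    rw [smul_sub, smul_sub]
    rw [show a•X2 - a•P + (b•Y2 - b•P) = (a•X2+b•Y2) - (a•P+b•P) by abel, hPc, ← this, hab,
      one_smul, sub_self]
  have hm : a * ((A*(P⁻¹*(X2-P)*P⁻¹)*A).trace).re
      + b * ((A*(P⁻¹*(Y2-P)*P⁻¹)*A).trace).re = 0 := by
    rw [hsmul, hsmul, ← Complex.add_re, ← Matrix.trace_add]
    rw [show A*(P⁻¹*(a•(X2-P))*P⁻¹)*A + A*(P⁻¹*(b•(Y2-P))*P⁻¹)*A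
        = A*(P⁻¹*(a•(X2-P)+b•(Y2-P))*P⁻¹)*A by
      simp only [Matrix.mul_add, Matrix.add_mul]]
    rw [hzero]
    simp
  rw [t1, t2]
  set p := ((A*P⁻¹*A).trace).re
  set mX := ((A*(P⁻¹*(X2-P)*P⁻¹)*A).trace).re
  set mY := ((A*(P⁻¹*(Y2-P)*P⁻¹)*A).trace).re
  set rX := ((((X2-P)*P⁻¹*A)ᴴ * X2⁻¹ * ((X2-P)*P⁻¹*A)).trace).re
  set rY := ((((Y2-P)*P⁻¹*A)ᴴ * Y2⁻¹ * ((Y2-P)*P⁻¹*A)).trace).re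
  have hexp : a*(p - mX + rX) + b*(p - mY + rY)
      = p*(a+b) - (a*mX + b*mY) + (a*rX + b*rY) := by ring
  rw [hexp, hab, hm, mul_one, sub_zero]
  have := mul_pos ha hrX
  have := mul_nonneg hb.le hrY
  linarith

end QHDCore

namespace QHDT
open QHDAux QHDAux2 QHDCore

noncomputable def tt (A : Mat n) (l : ℝ) (W : Mat n) : ℝ :=
  ((W * ((1-l)•W + l•A)⁻¹ * A).trace).re

lemma R_posDef {A W : Mat n} (hA : A.PosDef) (hW : W.PosDef) {l : ℝ}
    (hl : l ∈ Set.Icc (0:ℝ) 1) : ((1-l)•W + l•A).PosDef := by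
  rcases eq_or_lt_of_le hl.2 with h1 | h1
  · rw [h1]; simpa using hA
  · exact (posDef_smul (by linarith) hW).add_posSemidef
      (posSemidef_smul hl.1 hA.posSemidef)

lemma posDef_comb {X Y : Mat n} (hX : X.PosDef) (hY : Y.PosDef) {a b : ℝ}
    (ha : 0 < a) (hb : 0 < b) : (a•X + b•Y).PosDef :=
  (posDef_smul ha hX).add (posDef_smul hb hY)

lemma tt_eq {A W : Mat n} (hA : A.PosDef) (hW : W.PosDef) {l : ℝ}
    (hl : l ∈ Set.Ioo (0:ℝ) 1) :
    tt A l W = (1/(1-l)) * ((A.trace).re - l * ((A * ((1-l)•W + l•A)⁻¹ * A).trace).re) := by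
  have h1 : (0:ℝ) < 1 - l := by linarith [hl.2]
  have hR : ((1-l)•W + l•A).PosDef := R_posDef hA hW ⟨hl.1.le, hl.2.le⟩
  set R := (1-l)•W + l•A with hRdef
  have hWeq : W = (1/(1-l)) • (R - l•A) := by
    rw [hRdef, add_sub_cancel_right, smul_smul, one_div, inv_mul_cancel₀ h1.ne', one_smul]
  have hmat : W * R⁻¹ * A = (1/(1-l)) • (A - l•(A * R⁻¹ * A)) := by
    conv_lhs => rw [hWeq]
    rw [Matrix.smul_mul, Matrix.smul_mul]
    congr 1
    rw [Matrix.sub_mul, Matrix.sub_mul, Matrix.mul_nonsing_inv _ hR.det_pos.ne'.isUnit, one_mul,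
      Matrix.smul_mul, Matrix.smul_mul]
  rw [tt, hmat, Matrix.trace_smul, re_smul, Matrix.trace_sub, Complex.sub_re,
    Matrix.trace_smul, re_smul]

lemma tt_strict {A X Y : Mat n} (hA : A.PosDef) (hX : X.PosDef) (hY : Y.PosDef)
    (hXY : X ≠ Y) {a b : ℝ} (ha : 0 < a) (hb : 0 < b) (hab : a + b = 1)
    {l : ℝ} (hl : l ∈ Set.Ioo (0:ℝ) 1) :
    a * tt A l X + b * tt A l Y < tt A l (a•X+b•Y) := by
  have h1 : (0:ℝ) < 1 - l := by linarith [hl.2]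
  set Z := a•X+b•Y with hZdef
  have hZ : Z.PosDef := posDef_comb hX hY ha hb
  set X2 := (1-l)•X + l•A with hX2def
  set Y2 := (1-l)•Y + l•A with hY2def
  set P := (1-l)•Z + l•A with hPdef
  have hX2 : X2.PosDef := R_posDef hA hX ⟨hl.1.le, hl.2.le⟩
  have hY2 : Y2.PosDef := R_posDef hA hY ⟨hl.1.le, hl.2.le⟩
  have hP : P.PosDef := R_posDef hA hZ ⟨hl.1.le, hl.2.le⟩
  have hPc : a • X2 + b • Y2 = P := by
    rw [hX2def, hY2def, hPdef, hZdef]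
    match_scalars <;> first
      | ring1
      | (linear_combination (l:ℝ) * hab)
  have hne : X2 ≠ P := by
    have hXZ : X - Z = b • (X - Y) := by
      rw [hZdef, smul_sub]
      have hba : (1:ℝ) - a = b := by linarith
      calc X - (a•X+b•Y) = (1-a)•X - b•Y := by rw [sub_smul, one_smul]; abel
        _ = b•X - b•Y := by rw [hba]
    have : X2 - P = ((1-l)*b) • (X - Y) := by
      rw [hX2def, hPdef, show (1-l)•X + l•A - ((1-l)•Z + l•A) = (1-l)•(X-Z) by
        rw [smul_sub]; abel, hXZ, smul_smul]
    intro h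
    have h0 : ((1-l)*b) • (X - Y) = (0 : Mat n) := by rw [← this, h, sub_self]
    exact sub_ne_zero.mpr hXY (by
      have := smul_eq_zero.mp h0
      rcases this with h' | h'
      · exact absurd h' (by positivity)
      · exact absurd h' (sub_ne_zero.mpr hXY))
  have key := u_lt hA hP hX2 hY2 ha hb hab hPc hne
  rw [tt_eq hA hX hl, tt_eq hA hY hl, tt_eq hA hZ hl, ← hX2def, ← hY2def, ← hPdef]
  set TA := (A.trace).re
  set uX := ((A*X2⁻¹*A).trace).re
  set uY := ((A*Y2⁻¹*A).trace).re
  set uP := ((A*P⁻¹*A).trace).re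
  have hcomb : a * (1/(1-l) * (TA - l*uX)) + b * (1/(1-l) * (TA - l*uY))
      = 1/(1-l) * (TA*(a+b) - l*(a*uX + b*uY)) := by ring
  rw [hcomb, hab, mul_one]
  have hlt : l*uP < l*(a*uX + b*uY) := mul_lt_mul_of_pos_left key hl.1
  have hc : (0:ℝ) < 1/(1-l) := by positivity
  exact mul_lt_mul_of_pos_left (by linarith) hc

lemma tt_zero {A W : Mat n} (hW : W.PosDef) : tt A 0 W = (A.trace).re := by
  rw [tt]
  norm_num
  rw [Matrix.mul_nonsing_inv _ hW.det_pos.ne'.isUnit, one_mul]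

lemma tt_one {A W : Mat n} (hA : A.PosDef) : tt A 1 W = (W.trace).re := by
  rw [tt]
  norm_num
  rw [mul_assoc, Matrix.nonsing_inv_mul _ hA.det_pos.ne'.isUnit, mul_one]

lemma tt_concave {A X Y : Mat n} (hA : A.PosDef) (hX : X.PosDef) (hY : Y.PosDef)
    (hXY : X ≠ Y) {a b : ℝ} (ha : 0 < a) (hb : 0 < b) (hab : a + b = 1)
    {l : ℝ} (hl : l ∈ Set.Icc (0:ℝ) 1) :
    a * tt A l X + b * tt A l Y ≤ tt A l (a•X+b•Y) := by
  have hZ := posDef_comb hX hY ha hb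
  rcases eq_or_lt_of_le hl.1 with h0 | h0
  · rw [← h0, tt_zero hX, tt_zero hY, tt_zero hZ, ← add_mul, hab, one_mul]
  rcases eq_or_lt_of_le hl.2 with h1 | h1
  · rw [h1, tt_one hA, tt_one hA, tt_one hA, Matrix.trace_add, Complex.add_re,
      Matrix.trace_smul, Matrix.trace_smul, re_smul, re_smul]
  · exact (tt_strict hA hX hY hXY ha hb hab ⟨h0, h1⟩).le

end QHDT

namespace QHDSpec
open QHDAux QHDAux2 QHDCore QHDT

lemma contOn (f : ℝ → ℝ) (M : Mat n) : ContinuousOn f (spectrum ℝ M) := by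
  rw [continuousOn_iff_continuous_restrict]
  fun_prop

lemma spec_pos {M : Mat n} (hM : M.PosDef) : ∀ x ∈ spectrum ℝ M, 0 < x := by
  intro x hx
  rw [hM.1.spectrum_real_eq_range_eigenvalues] at hx
  obtain ⟨i, rfl⟩ := hx
  exact hM.eigenvalues_pos i

lemma den_pos {l x : ℝ} (hl : l ∈ Set.Icc (0:ℝ) 1) (hx : 0 < x) : 0 < (1-l)*x + l := by
  rcases eq_or_lt_of_le hl.1 with h0 | h0
  · rw [← h0]; simpa using hx
  · nlinarith [hl.2, mul_nonneg (by linarith [hl.2] : (0:ℝ) ≤ 1 - l) hx.le]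

lemma den_ge_min {l x : ℝ} (hl : l ∈ Set.Icc (0:ℝ) 1) (hx : 0 < x) :
    min x 1 ≤ (1-l)*x + l := by
  rcases le_total x 1 with h | h
  · rw [min_eq_left h]; nlinarith [hl.1, hl.2]
  · rw [min_eq_right h]; nlinarith [hl.1, hl.2]

lemma matSqrt_mul_self {A : Mat n} (hA : A.PosDef) : matSqrt A * matSqrt A = A := by
  rw [matSqrt, ← cfc_mul Real.sqrt Real.sqrt A (contOn _ _) (contOn _ _)]
  have h1 : (spectrum ℝ A).EqOn (fun x => Real.sqrt x * Real.sqrt x) id := by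
    intro x hx
    exact Real.mul_self_sqrt (spec_pos hA x hx).le
  rw [cfc_congr h1]
  exact cfc_id ℝ A hA.1

lemma cfc_eq_conj {M : Mat n} (hM : M.IsHermitian) (f : ℝ → ℝ) :
    cfc f M = (Matrix.IsHermitian.eigenvectorUnitary hM : Mat n)
      * diagonal (RCLike.ofReal ∘ f ∘ hM.eigenvalues)
      * star (Matrix.IsHermitian.eigenvectorUnitary hM : Mat n) := by
  rw [hM.cfc_eq f, Matrix.IsHermitian.cfc, Unitary.conjStarAlgAut_apply]

lemma matSqrt_posDef {A : Mat n} (hA : A.PosDef) : (matSqrt A).PosDef := by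
  rw [matSqrt, cfc_eq_conj hA.1]
  set U := (Matrix.IsHermitian.eigenvectorUnitary hA.1 : Mat n)
  have hUu : IsUnit U :=
    ⟨Unitary.toUnits (Matrix.IsHermitian.eigenvectorUnitary hA.1), rfl⟩
  have hD : (diagonal (RCLike.ofReal ∘ Real.sqrt ∘ hA.1.eigenvalues) : Mat n).PosDef := by
    rw [Matrix.posDef_diagonal_iff]
    intro i
    have : (0:ℝ) < Real.sqrt (hA.1.eigenvalues i) := Real.sqrt_pos.mpr (hA.eigenvalues_pos i)
    rw [Function.comp_apply, Function.comp_apply]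
    exact RCLike.ofReal_pos.mpr this
  have := posDef_conj hD (hUu.star)
  rwa [Matrix.star_eq_conjTranspose, Matrix.conjTranspose_conjTranspose,
    ← Matrix.star_eq_conjTranspose] at this

end QHDSpec

namespace QHDSpec2
open QHDAux QHDAux2 QHDCore QHDT QHDSpec

lemma trace_cfc_mul {M B : Mat n} (hM : M.IsHermitian) (f : ℝ → ℝ) :
    (cfc f M * B).trace = ∑ i, (RCLike.ofReal (f (hM.eigenvalues i)) : ℂ) *
      ((star (Matrix.IsHermitian.eigenvectorUnitary hM : Mat n)) * B *
        (Matrix.IsHermitian.eigenvectorUnitary hM : Mat n)) i i := by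
  rw [cfc_eq_conj hM]
  rw [mul_assoc, Matrix.trace_mul_comm, ← mul_assoc, Matrix.trace_mul_comm]
  rw [Matrix.trace]
  congr 1
  ext i
  rw [Matrix.diag_apply, Matrix.diagonal_mul]
  simp [mul_assoc]

lemma conj_diag_pos {A : Mat n} (hA : A.PosDef) {U : Mat n} (hU : IsUnit U) (i : Fin n) :
    0 < ((star U * A * U) i i) := by
  have hcol : (fun j => U j i) ≠ 0 := by
    intro h
    have h1 : U *ᵥ Pi.single i 1 = 0 := by
      ext j
      have := congrFun h j
      simpa [Matrix.mulVec_single] using this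
    have h2 := (Matrix.mulVec_injective_iff_isUnit.mpr hU) (h1.trans (Matrix.mulVec_zero U).symm)
    have := congrFun h2 i
    simp at this
  have := hA.dotProduct_mulVec_pos hcol
  rw [Matrix.star_eq_conjTranspose, diag_conj_eq (R := A) (N := U) i] at *
  exact this

lemma cfc_fl {M : Mat n} (hMpd : M.PosDef) {l : ℝ} (hl : l ∈ Set.Icc (0:ℝ) 1) :
    cfc (fun x : ℝ => x / ((1-l)*x + l)) M = M * ((1-l)•M + l•(1:Mat n))⁻¹ := by
  have hsa : IsSelfAdjoint M := hMpd.1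
  have hN : ((1-l)•M + l•(1:Mat n)).PosDef := R_posDef Matrix.PosDef.one hMpd hl
  have hg : cfc (fun x : ℝ => (1-l)*x + l) M = (1-l)•M + l•(1:Mat n) := by
    rw [cfc_add_const l (fun x : ℝ => (1-l)*x) M (contOn _ _) hsa,
      cfc_const_mul (1-l) (fun x : ℝ => x) M (contOn _ _), cfc_id' ℝ M hsa,
      Algebra.algebraMap_eq_smul_one]
  have hmain : cfc (fun x : ℝ => x / ((1-l)*x+l)) M * ((1-l)•M + l•(1:Mat n)) = M := by
    rw [← hg, ← cfc_mul _ _ M (contOn _ _) (contOn _ _)]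
    have h1 : (spectrum ℝ M).EqOn (fun x => (x/((1-l)*x+l)) * ((1-l)*x+l)) id := by
      intro x hx
      exact div_mul_cancel₀ x (den_pos hl (spec_pos hMpd x hx)).ne'
    rw [cfc_congr h1]
    exact cfc_id ℝ M hsa
  have h2 := congrArg (fun G => G * ((1-l)•M + l•(1:Mat n))⁻¹) hmain
  simpa only [mul_assoc, Matrix.mul_nonsing_inv _ hN.det_pos.ne'.isUnit, mul_one] using h2

lemma intg {μ : Measure ℝ} [IsProbabilityMeasure μ] (hμ01 : μ (Set.Icc (0:ℝ) 1) = 1)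
    {d : ℝ} (c : ℝ) (hd : 0 < d) : Integrable (fun l => d / ((1-l)*d + l) * c) μ := by
  have hae : ∀ᵐ l ∂μ, l ∈ Set.Icc (0:ℝ) 1 := by
    rw [ae_iff]
    have : {l : ℝ | ¬ l ∈ Set.Icc (0:ℝ) 1} = (Set.Icc (0:ℝ) 1)ᶜ := rfl
    rw [this, prob_compl_eq_zero_iff measurableSet_Icc]
    exact hμ01
  refine (integrable_const (d / min d 1 * |c|)).mono' ?_ ?_
  · refine Measurable.aestronglyMeasurable ?_
    exact (measurable_const.div (((measurable_const.sub measurable_id).mul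
      measurable_const).add measurable_id)).mul measurable_const
  · filter_upwards [hae] with l hl
    rw [Real.norm_eq_abs, abs_mul]
    have hden := den_pos hl hd
    have hmin : (0:ℝ) < min d 1 := lt_min hd one_pos
    have h1 : |d / ((1-l)*d + l)| = d / ((1-l)*d + l) := abs_of_nonneg (by positivity)
    rw [h1]
    have h2 : d / ((1-l)*d + l) ≤ d / min d 1 := by
      gcongr
      exact den_ge_min hl hd
    exact mul_le_mul_of_nonneg_right h2 (abs_nonneg c)

end QHDSpec2

namespace QHDKey
open QHDAux QHDAux2 QHDCore QHDT QHDSpec QHDSpec2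

lemma ae_Icc {μ : Measure ℝ} [IsProbabilityMeasure μ] (hμ01 : μ (Set.Icc (0:ℝ) 1) = 1) :
    ∀ᵐ l ∂μ, l ∈ Set.Icc (0:ℝ) 1 := by
  rw [ae_iff]
  have h : {l : ℝ | ¬ l ∈ Set.Icc (0:ℝ) 1} = (Set.Icc (0:ℝ) 1)ᶜ := rfl
  rw [h, prob_compl_eq_zero_iff measurableSet_Icc]
  exact hμ01

lemma kubo_trace_eq {μ : Measure ℝ} [IsProbabilityMeasure μ]
    (hμ01 : μ (Set.Icc (0:ℝ) 1) = 1)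
    {A W : Mat n} (hA : A.PosDef) (hW : W.PosDef) :
    ((kuboAndo μ A W).trace).re = ∫ l, tt A l W ∂μ ∧
      Integrable (fun l => tt A l W) μ := by
  set S := matSqrt A with hSdef
  have hS : S.PosDef := matSqrt_posDef hA
  have hSS : S * S = A := matSqrt_mul_self hA
  have hSdet : IsUnit S.det := hS.det_pos.ne'.isUnit
  set M := S⁻¹ * W * S⁻¹ with hMdef
  have hMpd : M.PosDef := by
    have h := posDef_conj hW hS.inv.isUnit
    rwa [hS.1.inv.eq] at h
  have hM : M.IsHermitian := hMpd.1
  set U := (Matrix.IsHermitian.eigenvectorUnitary hM : Mat n) with hUdef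
  have hUu : IsUnit U := ⟨Unitary.toUnits (Matrix.IsHermitian.eigenvectorUnitary hM), rfl⟩
  set d := hM.eigenvalues with hddef
  have hd : ∀ i, 0 < d i := hMpd.eigenvalues_pos
  set w := fun i => ((star U * A * U) i i).re with hwdef
  have hent : ∀ i, (star U * A * U) i i = ((w i : ℝ) : ℂ) := by
    intro i
    have h := conj_diag_pos hA hUu i
    have him := (Complex.lt_def.mp h).2
    apply Complex.ext
    · rfl
    · simpa using him.symm
  have htr : ∀ f : ℝ → ℝ, ((S * cfc f M * S).trace).re = ∑ i, f (d i) * w i := by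
    intro f
    have h1 : (S * cfc f M * S).trace = (cfc f M * A).trace := by
      rw [Matrix.trace_mul_cycle, hSS, Matrix.trace_mul_comm]
    rw [h1, trace_cfc_mul hM f, Complex.re_sum]
    refine Finset.sum_congr rfl fun i _ => ?_
    rw [hent i]
    have hco : (RCLike.ofReal (f (d i)) : ℂ) = Complex.ofReal (f (d i)) := rfl
    rw [hco, ← Complex.ofReal_mul, Complex.ofReal_re]
  have hkubo : kuboAndo μ A W = S * cfc (fmu μ) M * S := rfl
  have hmain : ((kuboAndo μ A W).trace).re = ∑ i, fmu μ (d i) * w i := by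
    rw [hkubo]; exact htr _
  have hbridge : ∀ l ∈ Set.Icc (0:ℝ) 1,
      (∑ i, d i / ((1-l)*(d i)+l) * w i) = tt A l W := by
    intro l hl
    have h2 := htr (fun x => x / ((1-l)*x + l))
    rw [← h2, cfc_fl hMpd hl]
    have hR : ((1-l)•W + l•A).PosDef := R_posDef hA hW hl
    set R := (1-l)•W + l•A with hRdef
    have hNR : (1-l)•M + l•(1:Mat n) = S⁻¹ * R * S⁻¹ := by
      rw [hRdef, Matrix.mul_add, Matrix.add_mul]
      congr 1
      · rw [Matrix.mul_smul, Matrix.smul_mul, hMdef]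
      · rw [Matrix.mul_smul, Matrix.smul_mul]
        congr 1
        rw [← hSS, ← mul_assoc, Matrix.nonsing_inv_mul _ hSdet, one_mul,
          Matrix.mul_nonsing_inv _ hSdet]
    have hNinv : ((1-l)•M + l•(1:Mat n))⁻¹ = S * R⁻¹ * S := by
      rw [hNR, Matrix.mul_inv_rev, Matrix.mul_inv_rev,
        Matrix.nonsing_inv_nonsing_inv _ hSdet, ← mul_assoc]
    have hfin : S * (M * ((1-l)•M + l•(1:Mat n))⁻¹) * S = W * R⁻¹ * A := by
      rw [hNinv, hMdef, ← hSS]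
      simp only [← mul_assoc]
      rw [Matrix.mul_nonsing_inv _ hSdet, one_mul, mul_assoc W S⁻¹ S,
        Matrix.nonsing_inv_mul _ hSdet, mul_one]
    rw [hfin]
    simp only [tt]
    rfl
  have hint : ∀ i : Fin n, Integrable (fun l => d i / ((1-l)*(d i) + l) * w i) μ :=
    fun i => intg hμ01 (w i) (hd i)
  have hsum_int : Integrable (fun l => ∑ i, d i / ((1-l)*(d i)+l) * w i) μ :=
    integrable_finset_sum _ (fun i _ => hint i)
  have hae := ae_Icc hμ01
  have htt_int : Integrable (fun l => tt A l W) μ := by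
    apply hsum_int.congr
    filter_upwards [hae] with l hl
    exact hbridge l hl
  refine ⟨?_, htt_int⟩
  rw [hmain]
  have hfi : ∀ i : Fin n, fmu μ (d i) * w i = ∫ l, d i / ((1-l)*(d i)+l) * w i ∂μ := by
    intro i
    rw [fmu, ← integral_mul_const]
  rw [Finset.sum_congr rfl (fun i _ => hfi i), ← integral_finset_sum _ (fun i _ => hint i)]
  apply integral_congr_ae
  filter_upwards [hae] with l hl
  exact hbridge l hl

end QHDKey


open QHDAux QHDAux2 QHDCore QHDT QHDSpec QHDSpec2 QHDKey

/-- If the support of `μ` is not contained in `{0,1}`, then for every positive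
definite `A` the map `X ↦ φ_μ(A,X)` is strictly convex on the cone of positive definite
matrices. -/
theorem qhd_strictConvexOn {n : ℕ} (μ : Measure ℝ) [IsProbabilityMeasure μ]
    (hμ01 : μ (Set.Icc (0 : ℝ) 1) = 1) (hsupp : μ ({0, 1} : Set ℝ)ᶜ ≠ 0)
    (A : Matrix (Fin n) (Fin n) ℂ) (hA : A.PosDef) :
    StrictConvexOn ℝ {X : Matrix (Fin n) (Fin n) ℂ | X.PosDef} (fun X => qhd μ A X) := by
  constructor
  · intro X hX Y hY a b ha hb hab
    simp only [Set.mem_setOf_eq] at *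
    rcases eq_or_lt_of_le ha with h0 | h0
    · have hb1 : b = 1 := by linarith
      simpa [← h0, hb1] using hY
    rcases eq_or_lt_of_le hb with h1 | h1
    · have ha1 : a = 1 := by linarith
      simpa [← h1, ha1] using hX
    · exact posDef_comb hX hY h0 h1
  · intro X hX Y hY hXY a b ha hb hab
    simp only [Set.mem_setOf_eq] at hX hY
    set Z := a•X + b•Y with hZdef
    have hZ : Z.PosDef := posDef_comb hX hY ha hb
    obtain ⟨hTX, hIX⟩ := kubo_trace_eq hμ01 hA hX
    obtain ⟨hTY, hIY⟩ := kubo_trace_eq hμ01 hA hY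
    obtain ⟨hTZ, hIZ⟩ := kubo_trace_eq hμ01 hA hZ
    have hq : ∀ W : Mat n, qhd μ A W = (1 - cmu μ) * (A.trace).re + cmu μ * (W.trace).re
        - ((kuboAndo μ A W).trace).re := by
      intro W
      rw [qhd, Matrix.trace_sub, Matrix.trace_add, Matrix.trace_smul, Matrix.trace_smul]
      rw [Complex.sub_re, Complex.add_re, re_smul, re_smul]
    show qhd μ A Z < a • qhd μ A X + b • qhd μ A Y
    rw [smul_eq_mul, smul_eq_mul, hq Z, hq X, hq Y, hTZ, hTX, hTY]
    have htrZ : (Z.trace).re = a * (X.trace).re + b * (Y.trace).re := by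
      rw [hZdef, Matrix.trace_add, Matrix.trace_smul, Matrix.trace_smul, Complex.add_re,
        re_smul, re_smul]
    rw [htrZ]
    -- the key integral inequality
    set F := fun l => tt A l Z - (a * tt A l X + b * tt A l Y) with hFdef
    have hIXa : Integrable (fun l => a * tt A l X) μ := hIX.const_mul a
    have hIYb : Integrable (fun l => b * tt A l Y) μ := hIY.const_mul b
    have hG : Integrable (fun l => a * tt A l X + b * tt A l Y) μ := hIXa.add hIYb
    have hFint : Integrable F μ := hIZ.sub hG
    have hIoo : μ (Set.Ioo (0:ℝ) 1) ≠ 0 := by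
      intro hio
      have hm : MeasurableSet ({0,1} : Set ℝ) :=
        (measurableSet_singleton 1).insert 0
      have h1 : μ (Set.Icc (0:ℝ) 1) ≤ μ ({0,1} : Set ℝ) + μ (Set.Ioo 0 1) := by
        refine le_trans (measure_mono ?_) (measure_union_le _ _)
        intro x hx
        by_cases hx0 : x = 0
        · exact Or.inl (by simp [hx0])
        by_cases hx1 : x = 1
        · exact Or.inl (by simp [hx1])
        · exact Or.inr ⟨lt_of_le_of_ne hx.1 (Ne.symm hx0), lt_of_le_of_ne hx.2 hx1⟩
      rw [hμ01, hio, add_zero] at h1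
      apply hsupp
      rw [measure_compl hm (measure_ne_top μ _)]
      have h2 : μ ({0,1}:Set ℝ) = 1 := le_antisymm prob_le_one h1
      rw [h2, measure_univ, tsub_self]
    have hpos : 0 < ∫ l, F l ∂μ := by
      rw [integral_pos_iff_support_of_nonneg_ae ?_ hFint]
      · refine lt_of_lt_of_le ?_ (measure_mono ?_ : μ (Set.Ioo (0:ℝ) 1) ≤ _)
        · exact lt_of_le_of_ne zero_le (Ne.symm hIoo)
        · intro l hl
          have := tt_strict hA hX hY hXY ha hb hab hl
          simp only [Function.mem_support, hFdef]
          exact ne_of_gt (sub_pos.mpr this)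
      · filter_upwards [ae_Icc hμ01] with l hl
        exact sub_nonneg.mpr (tt_concave hA hX hY hXY ha hb hab hl)
    have hFeq : ∫ l, F l ∂μ = (∫ l, tt A l Z ∂μ)
        - (a * ∫ l, tt A l X ∂μ + b * ∫ l, tt A l Y ∂μ) := by
      rw [hFdef, integral_sub hIZ hG, integral_add hIXa hIYb, integral_const_mul,
        integral_const_mul]
    have key : a * ∫ l, tt A l X ∂μ + b * ∫ l, tt A l Y ∂μ < ∫ l, tt A l Z ∂μ := by
      rw [hFeq] at hpos; linarith
    set C1 := (A.trace).re
    set c := cmu μ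
    set TrX := (X.trace).re
    set TrY := (Y.trace).re
    set IX := ∫ l, tt A l X ∂μ
    set IY := ∫ l, tt A l Y ∂μ
    set IZ := ∫ l, tt A l Z ∂μ
    have hexp : a*((1-c)*C1 + c*TrX - IX) + b*((1-c)*C1 + c*TrY - IY)
        = (a+b)*((1-c)*C1) + c*(a*TrX+b*TrY) - (a*IX+b*IY) := by ring
    rw [hexp, hab, one_mul]
    linarith
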